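/- arXiv:1405.0123 — 9 statements merged into one kernel-verified Lean document; each statement's English description precedes it below -/
import Mathlib

section
/- Let A be a ring, M a left A-module and S = End_A(M), with endomorphisms written on the right of their arguments so that S acts on the left of Hom-sets by composition. Every cyclic left ideal of S is of the form Hom(M,N) = {f ∈ S : Im(f) ⊆ N} for some submodule N of M if and only if M is semi-projective, i.e., for all f, g ∈ S with Im(g) ⊆ Im(f) there exists h ∈ S such that g = h followed by f (g factors through f). -/
/-- With endomorphisms written on the right (so that the cyclic left ideal generated by `f`
consists of the products `hf`, i.e. the compositions `f ∘ h`), every cyclic left ideal of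
`S = End_A(M)` is of the form `Hom(M,N) = {g : Im g ⊆ N}` for some submodule `N` of `M`
iff `M` is semi-projective: whenever `Im g ⊆ Im f` there is `h ∈ S` with `g = hf = f ∘ h`. -/
theorem cyclic_ideals_hom_iff_semiProjective {A M : Type*} [Ring A] [AddCommGroup M]
    [Module A M] :
    (∀ f : M →ₗ[A] M, ∃ N : Submodule A M,
        {g : M →ₗ[A] M | LinearMap.range g ≤ N} =
          {g : M →ₗ[A] M | ∃ h : M →ₗ[A] M, g = f.comp h}) ↔
    (∀ f g : M →ₗ[A] M, LinearMap.range g ≤ LinearMap.range f →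
        ∃ h : M →ₗ[A] M, g = f.comp h) := by
  constructor
  · intro H f g hle
    obtain ⟨N, hN⟩ := H f
    have hf : f ∈ {g : M →ₗ[A] M | ∃ h : M →ₗ[A] M, g = f.comp h} :=
      ⟨LinearMap.id, rfl⟩
    rw [← hN] at hf
    have : g ∈ {g : M →ₗ[A] M | LinearMap.range g ≤ N} := le_trans hle hf
    rw [hN] at this
    exact this
  · intro H f
    refine ⟨LinearMap.range f, Set.ext fun g => ⟨fun hg => H f g hg, ?_⟩⟩
    rintro ⟨h, rfl⟩
    show LinearMap.range (f.comp h) ≤ _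
    rw [LinearMap.range_comp]
    exact LinearMap.map_le_range
end

section
/- Let A be a ring, M a left A-module and S = End_A(M), with endomorphisms written on the right of their arguments so that S acts on the left of Hom-sets by composition. Every finitely generated left ideal of S is of the form Hom(M,N) = {f ∈ S : Im(f) ⊆ N} for some submodule N of M if and only if M is intrinsically projective, i.e., for every n ∈ ℕ, every A-linear map p : Mⁿ → M and every g ∈ S with Im(g) ⊆ Im(p), there exists an A-linear map h : M → Mⁿ with g = h followed by p. -/
/-- With endomorphisms written on the right (so that the left ideal generated by
`f₁, …, fₙ ∈ S = End_A(M)` consists of the sums `Σ cᵢfᵢ`, i.e. `Σ fᵢ ∘ cᵢ`), every finitely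
generated left ideal of `S` is of the form `Hom(M,N) = {g : Im g ⊆ N}` for some submodule
`N` of `M` iff `M` is intrinsically projective: every `g ∈ S` whose image is contained in
the image of some `p : Mⁿ → M` factors through `p`. -/
theorem fg_ideals_hom_iff_intrinsicallyProjective {A M : Type*} [Ring A] [AddCommGroup M]
    [Module A M] :
    (∀ (n : ℕ) (F : Fin n → (M →ₗ[A] M)), ∃ N : Submodule A M,
        {g : M →ₗ[A] M | LinearMap.range g ≤ N} =
          {g : M →ₗ[A] M | ∃ c : Fin n → (M →ₗ[A] M), g = ∑ i, (F i).comp (c i)}) ↔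
    (∀ (n : ℕ) (p : (Fin n → M) →ₗ[A] M) (g : M →ₗ[A] M),
        LinearMap.range g ≤ LinearMap.range p →
          ∃ h : M →ₗ[A] (Fin n → M), g = p.comp h) := by
  constructor
  · intro H n p g hg
    obtain ⟨N, hN⟩ := H n (fun i => p.comp (LinearMap.single A (fun _ => M) i))
    have hFi : ∀ i, LinearMap.range (p.comp (LinearMap.single A (fun _ => M) i)) ≤ N := by
      intro i
      have : (p.comp (LinearMap.single A (fun _ => M) i)) ∈
          {g : M →ₗ[A] M | LinearMap.range g ≤ N} := by
        rw [hN]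
        refine ⟨Pi.single i LinearMap.id, ?_⟩
        rw [Finset.sum_eq_single i]
        · simp
        · intro b _ hb; simp [Pi.single_apply, hb]
        · simp
      exact this
    have hgN : g ∈ {g : M →ₗ[A] M | LinearMap.range g ≤ N} := by
      rintro _ ⟨x, rfl⟩
      obtain ⟨y, hy⟩ := hg ⟨x, rfl⟩
      rw [← hy, ← Finset.univ_sum_single y, map_sum]
      exact Submodule.sum_mem N fun i _ => hFi i ⟨y i, rfl⟩
    rw [hN] at hgN
    obtain ⟨c, hc⟩ := hgN
    refine ⟨LinearMap.pi c, ?_⟩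
    rw [hc]
    ext x
    simp only [LinearMap.coe_sum, Finset.sum_apply, LinearMap.comp_apply, LinearMap.pi_apply]
    rw [← map_sum]
    congr 1
    exact (Finset.univ_sum_single (fun i => c i x)).symm |>.trans rfl |>.symm ▸ rfl
  · intro H n F
    refine ⟨⨆ i, LinearMap.range (F i), ?_⟩
    ext g
    simp only [Set.mem_setOf_eq]
    constructor
    · intro hg
      set p : (Fin n → M) →ₗ[A] M := ∑ i, (F i).comp (LinearMap.proj i) with hp
      have hle : LinearMap.range g ≤ LinearMap.range p := by
        refine hg.trans (iSup_le fun i => ?_)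
        rintro _ ⟨m, rfl⟩
        refine ⟨Pi.single i m, ?_⟩
        simp only [hp, LinearMap.coe_sum, Finset.sum_apply, LinearMap.comp_apply,
          LinearMap.proj_apply]
        rw [Finset.sum_eq_single i]
        · simp
        · intro b _ hb; simp [Pi.single_apply, hb]
        · simp
      obtain ⟨h, hh⟩ := H n p g hle
      refine ⟨fun i => (LinearMap.proj i).comp h, ?_⟩
      ext x
      simp [hh, hp]
    · rintro ⟨c, rfl⟩
      rintro _ ⟨x, rfl⟩
      simp only [LinearMap.coe_sum, Finset.sum_apply, LinearMap.comp_apply]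
      exact Submodule.sum_mem _ fun i _ =>
        Submodule.mem_iSup_of_mem i ⟨c i x, rfl⟩
end

section
/- Let A be an algebra over a commutative ring R. Then A is a compressible left A^e-module (i.e., for every nonzero two-sided ideal I of A there exists an injective (A,A)-bimodule homomorphism A → I) if and only if A is a prime ring and A has a large centre. -/
private lemma twoSided_eq_bot_iff {A : Type*} [Ring A] (J : TwoSidedIdeal A) :
    J = ⊥ ↔ ∀ y ∈ J, y = 0 := by
  constructor
  · rintro rfl y hy; exact TwoSidedIdeal.mem_bot (R:=A).mp hy
  · intro h
    refine le_antisymm (fun y hy => TwoSidedIdeal.mem_bot (R:=A).mpr (h y hy)) bot_le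

/-- An `R`-algebra `A` is a compressible left `A^e`-module (every nonzero two-sided ideal
`I` of `A` admits an injective `(A,A)`-bimodule homomorphism `A → I`) iff `A` is a prime
ring with a large centre. -/
theorem bimodule_compressible_iff_prime_large_centre {R A : Type*} [CommRing R] [Ring A]
    [Algebra R A] :
    (∀ I : TwoSidedIdeal A, I ≠ ⊥ →
      ∃ f : A →+ A, (∀ a x : A, f (a * x) = a * f x) ∧ (∀ x b : A, f (x * b) = f x * b) ∧
        (∀ x : A, f x ∈ I) ∧ Function.Injective f) ↔
    ((∀ I J : TwoSidedIdeal A, (∀ x ∈ I, ∀ y ∈ J, x * y = 0) → I = ⊥ ∨ J = ⊥) ∧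
      (∀ I : TwoSidedIdeal A, I ≠ ⊥ → ∃ a ∈ I, a ≠ 0 ∧ ∀ b : A, a * b = b * a)) := by
  constructor
  · intro H
    constructor
    · -- prime
      intro I J hIJ
      by_contra hc
      push_neg at hc
      obtain ⟨hI, hJ⟩ := hc
      obtain ⟨f, hl, hr, hmem, hinj⟩ := H I hI
      have : ∃ y ∈ J, y ≠ 0 := by
        by_contra h
        push_neg at h
        exact hJ ((twoSided_eq_bot_iff J).mpr h)
      obtain ⟨y, hyJ, hy0⟩ := this
      have : f y = 0 := by
        have : f y = f 1 * y := by rw [← hr 1 y, one_mul]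
        rw [this]
        exact hIJ _ (hmem 1) _ hyJ
      exact hy0 (hinj (by rw [this, map_zero]))
    · -- large centre
      intro I hI
      obtain ⟨f, hl, hr, hmem, hinj⟩ := H I hI
      refine ⟨f 1, hmem 1, ?_, ?_⟩
      · intro h0
        have hall : ∀ x : A, f x = 0 := fun x => by
          rw [show f x = f 1 * x from by rw [← hr 1 x, one_mul], h0, zero_mul]
        have : ∃ y ∈ I, y ≠ 0 := by
          by_contra h
          push_neg at h
          exact hI ((twoSided_eq_bot_iff I).mpr h)
        obtain ⟨y, _, hy0⟩ := this
        exact hy0 (hinj (by rw [hall y, map_zero]))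
      · intro b
        calc f 1 * b = f (1 * b) := (hr 1 b).symm
          _ = f (b * 1) := by rw [one_mul, mul_one]
          _ = b * f 1 := by rw [hr b 1, mul_one, show f b = b * f 1 from by
                rw [← hl b 1, mul_one]]
  · rintro ⟨hprime, hcentre⟩ I hI
    obtain ⟨a, haI, ha0, hacomm⟩ := hcentre I hI
    refine ⟨AddMonoidHom.mulLeft a, ?_, ?_, ?_, ?_⟩
    · intro b x
      simp only [AddMonoidHom.coe_mulLeft]
      rw [← mul_assoc, hacomm b, mul_assoc]
    · intro x b
      simp only [AddMonoidHom.coe_mulLeft, mul_assoc]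
    · intro x
      exact I.mul_mem_right a x haI
    · -- injectivity via primeness
      have key : ∀ x : A, a * x = 0 → x = 0 := by
        intro x hx
        -- left ideal aA and annihilator of a
        let Ia : TwoSidedIdeal A := TwoSidedIdeal.mk' {y | ∃ b, y = a * b}
          ⟨0, by rw [mul_zero]⟩
          (by rintro _ _ ⟨b, rfl⟩ ⟨c, rfl⟩; exact ⟨b + c, by rw [mul_add]⟩)
          (by rintro _ ⟨b, rfl⟩; exact ⟨-b, by rw [mul_neg]⟩)
          (by rintro c _ ⟨b, rfl⟩; exact ⟨c * b, by rw [← mul_assoc, ← hacomm c, mul_assoc]⟩)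
          (by rintro _ c ⟨b, rfl⟩; exact ⟨b * c, by rw [mul_assoc]⟩)
        let J : TwoSidedIdeal A := TwoSidedIdeal.mk' {y | a * y = 0}
          (by simp)
          (by intro y z hy hz; simp only [Set.mem_setOf_eq] at *; rw [mul_add, hy, hz, add_zero])
          (by intro y hy; simp only [Set.mem_setOf_eq] at *; rw [mul_neg, hy, neg_zero])
          (by intro c y hy; simp only [Set.mem_setOf_eq] at *
              rw [← mul_assoc, hacomm c, mul_assoc, hy, mul_zero])
          (by intro y c hy; simp only [Set.mem_setOf_eq] at *
              rw [← mul_assoc, hy, zero_mul])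
        have hprod : ∀ u ∈ Ia, ∀ y ∈ J, u * y = 0 := by
          intro u hu y hy
          rw [TwoSidedIdeal.mem_mk'] at hu hy
          obtain ⟨b, rfl⟩ := hu
          rw [hacomm b, mul_assoc, hy, mul_zero]
        rcases hprime Ia J hprod with h | h
        · exfalso
          have : a ∈ Ia := TwoSidedIdeal.mem_mk' _ _ _ _ _ _ a |>.mpr ⟨1, (mul_one a).symm⟩
          rw [h, TwoSidedIdeal.mem_bot] at this
          exact ha0 this
        · have : x ∈ J := TwoSidedIdeal.mem_mk' _ _ _ _ _ _ x |>.mpr hx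
          rw [h, TwoSidedIdeal.mem_bot] at this
          exact this
      intro x y hxy
      simp only [AddMonoidHom.coe_mulLeft] at hxy
      have : a * (x - y) = 0 := by rw [mul_sub, hxy, sub_self]
      have := key _ this
      exact sub_eq_zero.mp this
end

section
/- (Borges–Lomp) Let ∂ be a locally nilpotent derivation of an algebra A over a commutative ring R, and suppose the ring of constants A^∂ = ker(∂) is a domain. Then A is a compressible left A[x;∂]-module; concretely, for every nonzero ∂-stable left ideal I of A there exists c ∈ I with ∂(c) = 0 such that the map A → I sending a to a·c is injective. -/
/-- Borges–Lomp: if `∂` is a locally nilpotent derivation of an `R`-algebra `A` whose ring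
of constants `A^∂ = ker ∂` is a domain, then `A` is a compressible left `A[x;∂]`-module:
every nonzero `∂`-stable left ideal `I` of `A` contains a constant `c` such that right
multiplication by `c` is an injective map `A → I`. -/
theorem compressible_of_locallyNilpotent_constants_domain {R A : Type*} [CommRing R]
    [Ring A] [Algebra R A] (d : A →ₗ[R] A)
    (hleib : ∀ a b : A, d (a * b) = d a * b + a * d b)
    (hln : ∀ a : A, ∃ n : ℕ, (d ^ n) a = 0)
    (hnontriv : (1 : A) ≠ 0)
    (hdom : ∀ x y : A, d x = 0 → d y = 0 → x * y = 0 → x = 0 ∨ y = 0) :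
    ∀ I : Ideal A, (∀ x ∈ I, d x ∈ I) → I ≠ ⊥ →
      ∃ c ∈ I, d c = 0 ∧ Function.Injective (fun a : A => a * c) := by
  classical
  intro I hstab hI
  -- for any nonzero a, some iterated derivative of a is nonzero with derivative zero
  have key : ∀ a : A, a ≠ 0 → ∃ k : ℕ, (d ^ k) a ≠ 0 ∧ d ((d ^ k) a) = 0 := by
    intro a ha
    have h := hln a
    have hn : (d ^ Nat.find h) a = 0 := Nat.find_spec h
    have hpos : Nat.find h ≠ 0 := by
      intro h0
      rw [h0] at hn
      simp at hn
      exact ha hn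
    obtain ⟨m, hm⟩ := Nat.exists_eq_succ_of_ne_zero hpos
    refine ⟨m, ?_, ?_⟩
    · exact Nat.find_min h (by omega)
    · have : (d ^ (m + 1)) a = d ((d ^ m) a) := by
        rw [pow_succ']
        rfl
      rw [← this, show m + 1 = Nat.find h by omega]
      exact hn
  -- get nonzero x ∈ I
  obtain ⟨x, hxI, hx0⟩ : ∃ x ∈ I, x ≠ 0 := by
    by_contra h
    push_neg at h
    apply hI
    ext y
    simp only [Ideal.mem_bot]
    exact ⟨fun hy => h y hy, fun hy => hy ▸ I.zero_mem⟩
  -- iterated derivatives stay in I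
  have hiter : ∀ k : ℕ, ∀ y ∈ I, (d ^ k) y ∈ I := by
    intro k
    induction k with
    | zero => intro y hy; simpa using hy
    | succ n ih =>
      intro y hy
      have : (d ^ (n + 1)) y = d ((d ^ n) y) := by rw [pow_succ']; rfl
      rw [this]
      exact hstab _ (ih y hy)
  obtain ⟨k, hck0, hdc⟩ := key x hx0
  set c := (d ^ k) x with hc
  have hcI : c ∈ I := hiter k x hxI
  have hcne : c ≠ 0 := hck0
  refine ⟨c, hcI, hdc, ?_⟩
  -- d^m (a * c) = (d^m a) * c since d c = 0
  have hmul : ∀ (m : ℕ) (a : A), (d ^ m) (a * c) = (d ^ m) a * c := by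
    intro m
    induction m with
    | zero => intro a; simp
    | succ n ih =>
      intro a
      have h1 : (d ^ (n + 1)) (a * c) = (d ^ n) (d (a * c)) := by rw [pow_succ]; rfl
      have h2 : (d ^ (n + 1)) a = (d ^ n) (d a) := by rw [pow_succ]; rfl
      rw [h1, h2, hleib, hdc, mul_zero, add_zero, ih]
  -- kernel trivial
  have hker : ∀ a : A, a * c = 0 → a = 0 := by
    intro a hac
    by_contra ha
    obtain ⟨m, hb0, hdb⟩ := key a ha
    have : (d ^ m) a * c = 0 := by rw [← hmul, hac, map_zero]
    rcases hdom _ _ hdb hdc this with h | h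
    · exact hb0 h
    · exact hcne h
  intro a1 a2 h12
  have : (a1 - a2) * c = 0 := by
    rw [sub_mul]
    simpa [sub_eq_zero] using h12
  have := hker _ this
  exact sub_eq_zero.mp this
end

section
/- (Borges–Lomp) Let ∂ be a locally nilpotent derivation of an algebra A over a commutative ring R. Then the ring of constants A^∂ = ker(∂) is a left Ore domain if and only if A^∂ is a domain and A is a uniform left A[x;∂]-module, i.e., any two nonzero ∂-stable left ideals of A have nonzero intersection. -/
private lemma exists_const_aux {R A : Type*} [CommRing R] [Ring A] [Algebra R A]
    (d : A →ₗ[R] A) (hln : ∀ a : A, ∃ n : ℕ, (d ^ n) a = 0)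
    (I : Ideal A) (hI : ∀ v ∈ I, d v ∈ I) (hI0 : I ≠ ⊥) :
    ∃ z ∈ I, z ≠ 0 ∧ d z = 0 := by
  classical
  obtain ⟨a, haI, ha0⟩ := Submodule.exists_mem_ne_zero_of_ne_bot hI0
  have h := hln a
  have hmem : ∀ k : ℕ, (d ^ k) a ∈ I := by
    intro k
    induction k with
    | zero => simpa using haI
    | succ k ih =>
      have : (d ^ (k + 1)) a = d ((d ^ k) a) := by rw [pow_succ']; rfl
      rw [this]; exact hI _ ih
  have hn : (d ^ Nat.find h) a = 0 := Nat.find_spec h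
  have hn0 : Nat.find h ≠ 0 := by
    intro e; rw [e] at hn; simp at hn; exact ha0 hn
  obtain ⟨m, hm⟩ := Nat.exists_eq_succ_of_ne_zero hn0
  refine ⟨(d ^ m) a, hmem m, Nat.find_min h (by omega), ?_⟩
  have : (d ^ (m + 1)) a = d ((d ^ m) a) := by rw [pow_succ']; rfl
  rw [← this, show m + 1 = Nat.find h from hm.symm, hn]

private lemma const_factor_aux {R A : Type*} [CommRing R] [Ring A] [Algebra R A]
    (d : A →ₗ[R] A)
    (hleib : ∀ a b : A, d (a * b) = d a * b + a * d b)
    (hln : ∀ a : A, ∃ n : ℕ, (d ^ n) a = 0)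
    (hdom : ∀ x y : A, d x = 0 → d y = 0 → x * y = 0 → x = 0 ∨ y = 0)
    {a z u : A} (hda : d a = 0) (ha0 : a ≠ 0) (hdz : d z = 0) (hz0 : z ≠ 0)
    (hz : u * a = z) : ∃ x : A, d x = 0 ∧ x * a = z := by
  classical
  have key : ∀ k : ℕ, (d ^ (k + 1)) u * a = 0 := by
    intro k
    induction k with
    | zero =>
      have h1 := hleib u a
      rw [hz, hdz, hda, mul_zero, add_zero] at h1
      simpa [pow_one] using h1.symm
    | succ k ih =>
      have h1 := hleib ((d ^ (k + 1)) u) a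
      rw [ih, hda, mul_zero, add_zero, map_zero] at h1
      have h2 : (d ^ (k + 2)) u = d ((d ^ (k + 1)) u) := by rw [pow_succ']; rfl
      rw [h2]; exact h1.symm
  have h := hln u
  have hspec : (d ^ Nat.find h) u = 0 := Nat.find_spec h
  by_cases h0 : Nat.find h = 0
  · exfalso
    rw [h0, pow_zero] at hspec
    apply hz0
    rw [← hz]
    simp [show u = 0 from hspec]
  by_cases h1 : Nat.find h = 1
  · rw [h1, pow_one] at hspec
    exact ⟨u, hspec, hz⟩
  · exfalso
    obtain ⟨m, hm⟩ : ∃ m, Nat.find h = m + 2 := ⟨Nat.find h - 2, by omega⟩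
    have hw0 : (d ^ (m + 1)) u ≠ 0 := Nat.find_min h (by omega)
    have hdw : d ((d ^ (m + 1)) u) = 0 := by
      have h2 : (d ^ (m + 2)) u = d ((d ^ (m + 1)) u) := by rw [pow_succ']; rfl
      rw [← h2, ← hm, hspec]
    rcases hdom _ _ hdw hda (key m) with h' | h'
    · exact hw0 h'
    · exact ha0 h'

/-- Borges–Lomp: for a locally nilpotent derivation `∂` of an `R`-algebra `A`, the ring of
constants `A^∂ = ker ∂` is a left Ore domain iff `A^∂` is a domain and `A` is a uniform
left `A[x;∂]`-module (any two nonzero `∂`-stable left ideals of `A` intersect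
nontrivially). -/
theorem constants_leftOre_iff_uniform {R A : Type*} [CommRing R] [Ring A] [Algebra R A]
    (d : A →ₗ[R] A)
    (hleib : ∀ a b : A, d (a * b) = d a * b + a * d b)
    (hln : ∀ a : A, ∃ n : ℕ, (d ^ n) a = 0) :
    (((1 : A) ≠ 0 ∧ ∀ x y : A, d x = 0 → d y = 0 → x * y = 0 → x = 0 ∨ y = 0) ∧
      ∀ a b : A, d a = 0 → d b = 0 → a ≠ 0 → b ≠ 0 →
        ∃ x y : A, d x = 0 ∧ d y = 0 ∧ x * a = y * b ∧ x * a ≠ 0) ↔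
    (((1 : A) ≠ 0 ∧ ∀ x y : A, d x = 0 → d y = 0 → x * y = 0 → x = 0 ∨ y = 0) ∧
      ∀ I J : Ideal A, (∀ v ∈ I, d v ∈ I) → (∀ v ∈ J, d v ∈ J) →
        I ≠ ⊥ → J ≠ ⊥ → I ⊓ J ≠ ⊥) := by
  constructor
  · rintro ⟨hdom, hore⟩
    refine ⟨hdom, ?_⟩
    intro I J hI hJ hI0 hJ0 hIJ
    obtain ⟨a, haI, ha0, hda⟩ := exists_const_aux d hln I hI hI0
    obtain ⟨b, hbJ, hb0, hdb⟩ := exists_const_aux d hln J hJ hJ0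
    obtain ⟨x, y, hdx, hdy, hxy, hne⟩ := hore a b hda hdb ha0 hb0
    apply hne
    have hmem : x * a ∈ I ⊓ J :=
      ⟨I.mul_mem_left x haI, hxy ▸ J.mul_mem_left y hbJ⟩
    rw [hIJ] at hmem
    exact (Submodule.mem_bot A).mp hmem
  · rintro ⟨hdom, huni⟩
    refine ⟨hdom, ?_⟩
    intro a b hda hdb ha0 hb0
    set I := Ideal.span ({a} : Set A) with hIdef
    set J := Ideal.span ({b} : Set A) with hJdef
    have stab : ∀ (c : A), d c = 0 → ∀ v ∈ Ideal.span ({c} : Set A),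
        d v ∈ Ideal.span ({c} : Set A) := by
      intro c hdc v hv
      obtain ⟨w, hw⟩ := Submodule.mem_span_singleton.mp hv
      rw [smul_eq_mul] at hw
      refine Submodule.mem_span_singleton.mpr ⟨d w, ?_⟩
      rw [smul_eq_mul, ← hw, hleib, hdc, mul_zero, add_zero]
    have hI0 : I ≠ ⊥ := by
      intro h
      apply ha0
      have : a ∈ I := Ideal.subset_span rfl
      rw [h] at this
      exact (Submodule.mem_bot A).mp this
    have hJ0 : J ≠ ⊥ := by
      intro h
      apply hb0
      have : b ∈ J := Ideal.subset_span rfl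
      rw [h] at this
      exact (Submodule.mem_bot A).mp this
    have hIJ := huni I J (stab a hda) (stab b hdb) hI0 hJ0
    have hstabIJ : ∀ v ∈ I ⊓ J, d v ∈ I ⊓ J := by
      intro v hv
      exact ⟨stab a hda v hv.1, stab b hdb v hv.2⟩
    obtain ⟨z, hzIJ, hz0, hdz⟩ := exists_const_aux d hln (I ⊓ J) hstabIJ hIJ
    obtain ⟨u, hu⟩ := Submodule.mem_span_singleton.mp hzIJ.1
    obtain ⟨v, hv⟩ := Submodule.mem_span_singleton.mp hzIJ.2
    rw [smul_eq_mul] at hu hv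
    obtain ⟨x, hdx, hx⟩ := const_factor_aux d hleib hln hdom.2 hda ha0 hdz hz0 hu
    obtain ⟨y, hdy, hy⟩ := const_factor_aux d hleib hln hdom.2 hdb hb0 hdz hz0 hv
    exact ⟨x, y, hdx, hdy, by rw [hx, hy], by rw [hx]; exact hz0⟩
end

section
/- (Borges–Lomp) Let A be an algebra over a field k of characteristic zero and ∂ a locally nilpotent derivation of A such that ∂(a) = 1 for some a ∈ A. Then the ring of constants A^∂ = ker(∂) is a left Ore domain if and only if A is a left Ore domain. -/
section BLaux

variable {k A : Type*} [Field k] [CharZero k] [Ring A] [Algebra k A]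
variable (d : A →ₗ[k] A)

theorem BL.pow_succ_apply (n : ℕ) (x : A) : (d ^ (n+1)) x = (d ^ n) (d x) := by
  rw [pow_succ, Module.End.mul_apply]

theorem BL.pow_succ_apply' (n : ℕ) (x : A) : (d ^ (n+1)) x = d ((d ^ n) x) := by
  rw [pow_succ', Module.End.mul_apply]

theorem BL.mono {i j : ℕ} (h : i ≤ j) {x : A} (hx : (d ^ i) x = 0) : (d ^ j) x = 0 := by
  obtain ⟨l, rfl⟩ := Nat.exists_eq_add_of_le h
  rw [add_comm, pow_add, Module.End.mul_apply, hx, map_zero]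

theorem BL.nsmul_cancel (d : A →ₗ[k] A) {c : ℕ} (hc : c ≠ 0) {z : A} (h : c • z = 0) : z = 0 := by
  have h2 : (c : k) • z = 0 := by rw [Nat.cast_smul_eq_nsmul]; exact h
  have h3 : ((c : k)⁻¹ • ((c:k) • z)) = z := inv_smul_smul₀ (by exact_mod_cast hc) z
  rw [h2, smul_zero] at h3; exact h3.symm

variable (hleib : ∀ a b : A, d (a * b) = d a * b + a * d b)
include hleib

theorem BL.d_one : d (1 : A) = 0 := by
  have h := hleib 1 1
  rw [one_mul, mul_one, one_mul] at h
  nth_rewrite 1 [← add_zero (d 1)] at h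
  exact (add_left_cancel h).symm

theorem BL.lconst {x : A} (hx : d x = 0) : ∀ (n : ℕ) (y : A), (d ^ n) (x * y) = x * (d ^ n) y := by
  intro n
  induction n with
  | zero => intro y; simp
  | succ n IH =>
    intro y
    rw [BL.pow_succ_apply, hleib, hx, zero_mul, zero_add, IH, BL.pow_succ_apply]

theorem BL.rconst {y : A} (hy : d y = 0) : ∀ (n : ℕ) (x : A), (d ^ n) (x * y) = (d ^ n) x * y := by
  intro n
  induction n with
  | zero => intro x; simp
  | succ n IH =>
    intro x
    rw [BL.pow_succ_apply, hleib, hy, mul_zero, add_zero, IH, BL.pow_succ_apply]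

theorem BL.vanish : ∀ (n m : ℕ) (x y : A), (d ^ (n+1)) x = 0 → (d ^ (m+1)) y = 0 →
    (d ^ (n+m+1)) (x*y) = 0 := by
  intro n
  induction n with
  | zero =>
    intro m x y hx hy
    rw [pow_one] at hx
    rw [zero_add, BL.lconst d hleib hx, hy, mul_zero]
  | succ n IHn =>
    intro m
    induction m with
    | zero =>
      intro x y hx hy
      rw [pow_one] at hy
      rw [add_zero, BL.rconst d hleib hy, hx, zero_mul]
    | succ m IHm =>
      intro x y hx hy
      have e : n+1+(m+1)+1 = (n+(m+1)+1)+1 := by omega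
      rw [e, BL.pow_succ_apply, hleib, map_add]
      have h1 : (d ^ (n+(m+1)+1)) (d x * y) = 0 := by
        apply IHn (m+1) (d x) y
        · rw [← BL.pow_succ_apply]; exact hx
        · exact BL.mono d (by omega) hy
      have h2 : (d ^ (n+(m+1)+1)) (x * d y) = 0 := by
        have e2 : n+(m+1)+1 = (n+1)+m+1 := by omega
        rw [e2]
        apply IHm x (d y)
        · exact hx
        · rw [← BL.pow_succ_apply]; exact hy
      rw [h1, h2, add_zero]

theorem BL.top : ∀ (n m : ℕ) (x y : A), (d ^ (n+1)) x = 0 → (d ^ (m+1)) y = 0 →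
    (d ^ (n+m)) (x*y) = ((n+m).choose n) • ((d ^ n) x * (d ^ m) y) := by
  intro n
  induction n with
  | zero =>
    intro m x y hx hy
    rw [pow_one] at hx
    simp [BL.lconst d hleib hx m y]
  | succ n IHn =>
    intro m
    induction m with
    | zero =>
      intro x y hx hy
      rw [pow_one] at hy
      simp [BL.rconst d hleib hy (n+1) x]
    | succ m IHm =>
      intro x y hx hy
      have e : (n+1)+(m+1) = (n+(m+1))+1 := by omega
      rw [e, BL.pow_succ_apply, hleib, map_add]
      have h1 : (d ^ (n+(m+1))) (d x * y)
          = ((n+(m+1)).choose n) • ((d ^ (n+1)) x * (d ^ (m+1)) y) := by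
        rw [IHn (m+1) (d x) y (by rw [← BL.pow_succ_apply]; exact hx)
          (BL.mono d (by omega) hy), ← BL.pow_succ_apply]
      have h2 : (d ^ (n+(m+1))) (x * d y)
          = ((n+(m+1)).choose (n+1)) • ((d ^ (n+1)) x * (d ^ (m+1)) y) := by
        have e2 : n+(m+1) = (n+1)+m := by omega
        rw [e2, IHm x (d y) hx (by rw [← BL.pow_succ_apply]; exact hy), ← BL.pow_succ_apply]
      have hch : (n+(m+1)).choose n + (n+(m+1)).choose (n+1) = ((n+1)+(m+1)).choose (n+1) := by
        rw [show (n+1)+(m+1) = (n+(m+1))+1 by omega, Nat.choose_succ_succ]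
      rw [h1, h2, ← add_smul, hch, e]

theorem BL.apow (a : A) (ha : d a = 1) :
    ∀ j : ℕ, ∃ c : ℕ, c ≠ 0 ∧ (d ^ j) (a ^ j) = c • (1 : A) ∧ (d ^ (j+1)) (a ^ j) = 0 := by
  intro j
  induction j with
  | zero =>
    refine ⟨1, one_ne_zero, by simp, ?_⟩
    rw [pow_zero, pow_one, BL.d_one d hleib]
  | succ j IH =>
    obtain ⟨c, hc, htop, hvan⟩ := IH
    refine ⟨(1+j).choose 1 * c, by simp [Nat.choose_one_right]; omega, ?_, ?_⟩
    · have h := BL.top d hleib 1 j a (a ^ j) (by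
        rw [BL.pow_succ_apply, ha, pow_one, BL.d_one d hleib]) hvan
      rw [pow_one, ha, one_mul, htop, show 1+j = j+1 by omega] at h
      rw [pow_succ' a j, h, smul_smul, show (j+1).choose 1 = (1+j).choose 1 by rw [Nat.add_comm]]
    · have h := BL.vanish d hleib 1 j a (a ^ j) (by
        rw [BL.pow_succ_apply, ha, pow_one, BL.d_one d hleib]) hvan
      rw [show 1+j+1 = j+1+1 by omega] at h
      rw [pow_succ' a j]
      exact h

end BLaux

/-- Borges–Lomp: let `A` be an algebra over a field `k` of characteristic zero and `∂` a
locally nilpotent derivation of `A` with `∂(a) = 1` for some `a ∈ A`. Then the ring of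
constants `A^∂ = ker ∂` is a left Ore domain iff `A` is a left Ore domain. -/
theorem constants_leftOre_iff_leftOre {k A : Type*} [Field k] [CharZero k] [Ring A]
    [Algebra k A] (d : A →ₗ[k] A)
    (hleib : ∀ a b : A, d (a * b) = d a * b + a * d b)
    (hln : ∀ a : A, ∃ n : ℕ, (d ^ n) a = 0)
    (a : A) (ha : d a = 1) :
    (((1 : A) ≠ 0 ∧ ∀ x y : A, d x = 0 → d y = 0 → x * y = 0 → x = 0 ∨ y = 0) ∧
      ∀ u v : A, d u = 0 → d v = 0 → u ≠ 0 → v ≠ 0 →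
        ∃ x y : A, d x = 0 ∧ d y = 0 ∧ x * u = y * v ∧ x * u ≠ 0) ↔
    (((1 : A) ≠ 0 ∧ ∀ x y : A, x * y = 0 → x = 0 ∨ y = 0) ∧
      ∀ u v : A, u ≠ 0 → v ≠ 0 → ∃ x y : A, x * u = y * v ∧ x * u ≠ 0) := by
  classical
  have lead : ∀ x : A, x ≠ 0 → ∃ n : ℕ, Nat.find (hln x) = n + 1 ∧ (d ^ n) x ≠ 0 ∧
      (d ^ (n+1)) x = 0 ∧ d ((d ^ n) x) = 0 := by
    intro x hx
    have h0 : Nat.find (hln x) ≠ 0 := by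
      intro h
      have hs := Nat.find_spec (hln x)
      rw [h] at hs; simp at hs; exact hx hs
    obtain ⟨n, hn⟩ := Nat.exists_eq_succ_of_ne_zero h0
    have h1 : (d ^ n) x ≠ 0 := Nat.find_min (hln x) (by omega)
    have h2 : (d ^ (n+1)) x = 0 := by have hs := Nat.find_spec (hln x); rw [hn] at hs; exact hs
    exact ⟨n, hn, h1, h2, by rw [← BL.pow_succ_apply']; exact h2⟩
  constructor
  · -- hard direction: constants Ore domain → A Ore domain
    intro hB
    obtain ⟨⟨h10, hBdom⟩, hBore⟩ := hB
    have hdom : ∀ x y : A, x ≠ 0 → y ≠ 0 → x * y ≠ 0 := by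
      intro x y hx hy hxy0
      obtain ⟨n, hfx, hxn, hxn1, hcx⟩ := lead x hx
      obtain ⟨m, hfy, hym, hym1, hcy⟩ := lead y hy
      have htop := BL.top d hleib n m x y hxn1 hym1
      rw [hxy0, map_zero] at htop
      have hne : (d ^ n) x * (d ^ m) y ≠ 0 := by
        intro h
        rcases hBdom _ _ hcx hcy h with h | h
        · exact hxn h
        · exact hym h
      exact hne (BL.nsmul_cancel d (Nat.choose_pos (Nat.le_add_right n m)).ne' htop.symm)
    have key : ∀ M : ℕ, ∀ p q : A, p ≠ 0 → q ≠ 0 → Nat.find (hln q) ≤ Nat.find (hln p) →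
        Nat.find (hln p) + Nat.find (hln q) ≤ M → ∃ x y : A, x * p = y * q ∧ x * p ≠ 0 := by
      intro M
      induction M using Nat.strong_induction_on with
      | _ M IH =>
      intro p q hp hq hle hM
      obtain ⟨n, hfp, hpn, hpn1, hcP⟩ := lead p hp
      obtain ⟨m, hfq, hqm, hqm1, hcQ⟩ := lead q hq
      have hmn : m ≤ n := by omega
      have hwkey : ∃ c : ℕ, c ≠ 0 ∧ (d ^ n) (a^(n-m) * q) = c • (d ^ m) q ∧
          (d ^ (n+1)) (a^(n-m) * q) = 0 := by
        obtain ⟨c₀, hc₀, hatop, havan⟩ := BL.apow d hleib a ha (n - m)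
        have h := BL.top d hleib (n-m) m (a ^ (n-m)) q havan hqm1
        rw [hatop, smul_mul_assoc, one_mul, smul_smul] at h
        have hv := BL.vanish d hleib (n-m) m (a ^ (n-m)) q havan hqm1
        have e : n - m + m = n := by omega
        rw [e] at h hv
        exact ⟨_, Nat.mul_ne_zero (Nat.choose_pos (Nat.sub_le n m)).ne' hc₀, h, hv⟩
      obtain ⟨c, hcne, hwtop, hwvan⟩ := hwkey
      obtain ⟨x, y, hxc, hyc, hxy, hxne⟩ := hBore ((d ^ n) p) (c • (d ^ m) q) hcP
        (by rw [map_nsmul, hcQ, smul_zero]) hpn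
        (fun h => hqm (BL.nsmul_cancel d hcne h))
      have hx0 : x ≠ 0 := by rintro rfl; rw [zero_mul] at hxne; exact hxne rfl
      set r : A := x * p - y * (a^(n-m) * q) with hrdef
      have hdr : (d ^ n) r = 0 := by
        rw [hrdef, map_sub, BL.lconst d hleib hxc, BL.lconst d hleib hyc, hwtop, hxy, sub_self]
      have hrn : Nat.find (hln r) ≤ n := Nat.find_le hdr
      by_cases hr0 : r = 0
      · have h0 : x * p - y * (a^(n-m) * q) = 0 := by rw [← hrdef]; exact hr0
        refine ⟨x, y * a ^ (n-m), ?_, hdom x p hx0 hp⟩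
        rw [mul_assoc]
        exact sub_eq_zero.mp h0
      · have hlt : Nat.find (hln r) + Nat.find (hln q) < M := by omega
        have hcm : ∃ u v2 : A, u * r = v2 * q ∧ u * r ≠ 0 := by
          rcases le_total (Nat.find (hln q)) (Nat.find (hln r)) with h | h
          · exact IH _ hlt r q hr0 hq h le_rfl
          · obtain ⟨u, v2, huv, hne2⟩ := IH _ (by omega) q r hq hr0 h le_rfl
            exact ⟨v2, u, huv.symm, by rw [← huv]; exact hne2⟩
        obtain ⟨u, v2, huv, hune⟩ := hcm
        have hu0 : u ≠ 0 := by rintro rfl; rw [zero_mul] at hune; exact hune rfl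
        refine ⟨u * x, v2 + u * (y * a ^ (n-m)), ?_, hdom (u*x) p (hdom u x hu0 hx0) hp⟩
        have hxp : x * p = r + y * (a^(n-m) * q) := by rw [hrdef, sub_add_cancel]
        calc (u*x)*p = u*(x*p) := by rw [mul_assoc]
          _ = u*r + u*(y*(a^(n-m)*q)) := by rw [hxp, mul_add]
          _ = v2*q + (u*(y*a^(n-m)))*q := by rw [huv]; simp only [mul_assoc]
          _ = (v2 + u*(y*a^(n-m)))*q := (add_mul _ _ _).symm
    refine ⟨⟨h10, fun x y hxy => ?_⟩, ?_⟩
    · by_contra h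
      push_neg at h
      exact hdom x y h.1 h.2 hxy
    · intro p q hp hq
      rcases le_total (Nat.find (hln q)) (Nat.find (hln p)) with h | h
      · exact key _ p q hp hq h le_rfl
      · obtain ⟨x, y, hxy, hne⟩ := key _ q p hq hp h le_rfl
        exact ⟨y, x, hxy.symm, by rw [← hxy]; exact hne⟩
  · -- easy direction
    intro hA
    obtain ⟨⟨h10, hAdom⟩, hore⟩ := hA
    refine ⟨⟨h10, fun x y _ _ h => hAdom x y h⟩, ?_⟩
    intro u v hu hv hu0 hv0
    obtain ⟨x, y, hxy, hne⟩ := hore u v hu0 hv0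
    have hx0 : x ≠ 0 := by rintro rfl; rw [zero_mul] at hne; exact hne rfl
    obtain ⟨n, hfind, hdn, hdn1, hcx⟩ := lead x hx0
    have hxu : ∀ j : ℕ, (d ^ j) (x * u) = (d ^ j) x * u := fun j => BL.rconst d hleib hu j x
    have hyv : ∀ j : ℕ, (d ^ j) (y * v) = (d ^ j) y * v := fun j => BL.rconst d hleib hv j y
    have heq : (d ^ n) x * u = (d ^ n) y * v := by rw [← hxu, ← hyv, hxy]
    have hy1 : (d ^ (n+1)) y * v = 0 := by rw [← hyv, ← hxy, hxu, hdn1, zero_mul]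
    have hy2 : (d ^ (n+1)) y = 0 := by
      rcases hAdom _ _ hy1 with h | h
      · exact h
      · exact absurd h hv0
    refine ⟨(d ^ n) x, (d ^ n) y, hcx, ?_, heq, ?_⟩
    · rw [← BL.pow_succ_apply']; exact hy2
    · intro h
      rcases hAdom _ _ h with h | h
      · exact hdn h
      · exact hu0 h
end

section
/- (Goodearl's example) Let k be a field of characteristic zero, A = k[[t]] the power series ring, and ∂ : A → A the k-linear map with ∂(Σₙ aₙtⁿ) = Σₙ n aₙtⁿ. Then: (i) ∂ is a derivation of A; (ii) ker(∂) = k (the constant series); (iii) for every m ≥ 1 and a ∈ A, if ∂(a) ∈ tᵐA then a ∈ k + tᵐA; (iv) the ideal tA is a nonzero ∂-stable ideal with tA ∩ ker(∂) = 0, so A is not a retractable left A[x;∂]-module. -/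
/-- The Euler derivation `∂(Σ aₙ tⁿ) = Σ n aₙ tⁿ` on the power series ring `k[[t]]`. -/
noncomputable def eulerD (k : Type*) [Field k] : PowerSeries k →ₗ[k] PowerSeries k where
  toFun f := PowerSeries.mk fun n => (n : k) * PowerSeries.coeff n f
  map_add' f g := by
    ext n
    simp [mul_add]
  map_smul' c f := by
    ext n
    simp [PowerSeries.coeff_mk]
    ring

lemma coeff_eulerD {k : Type*} [Field k] (f : PowerSeries k) (n : ℕ) :
    PowerSeries.coeff n (eulerD k f) = (n : k) * PowerSeries.coeff n f := by
  simp [eulerD]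

lemma eulerD_leibniz {k : Type*} [Field k] (f g : PowerSeries k) :
    eulerD k (f * g) = eulerD k f * g + f * eulerD k g := by
  ext n
  rw [map_add, coeff_eulerD, PowerSeries.coeff_mul, PowerSeries.coeff_mul,
    PowerSeries.coeff_mul, Finset.mul_sum, ← Finset.sum_add_distrib]
  refine Finset.sum_congr rfl fun p hp => ?_
  rw [Finset.HasAntidiagonal.mem_antidiagonal] at hp
  rw [coeff_eulerD, coeff_eulerD, ← hp]
  push_cast
  ring

lemma eulerD_eq_zero_iff {k : Type*} [Field k] [CharZero k] (f : PowerSeries k) :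
    eulerD k f = 0 ↔ ∃ c : k, f = PowerSeries.C c := by
  constructor
  · intro h
    refine ⟨PowerSeries.coeff 0 f, ?_⟩
    ext n
    have := congrArg (PowerSeries.coeff n) h
    rw [coeff_eulerD, map_zero] at this
    rcases Nat.eq_zero_or_pos n with hn | hn
    · subst hn; simp
    · have hn' : (n : k) ≠ 0 := Nat.cast_ne_zero.mpr hn.ne'
      have : PowerSeries.coeff n f = 0 := by
        rcases mul_eq_zero.mp this with h' | h'
        · exact absurd h' hn'
        · exact h'
      rw [this, PowerSeries.coeff_C, if_neg hn.ne']
  · rintro ⟨c, rfl⟩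
    ext n
    rw [coeff_eulerD, PowerSeries.coeff_C]
    rcases Nat.eq_zero_or_pos n with hn | hn
    · subst hn; simp
    · rw [if_neg hn.ne', mul_zero, map_zero]

lemma eulerD_X {k : Type*} [Field k] : eulerD k PowerSeries.X = PowerSeries.X := by
  ext n
  rw [coeff_eulerD, PowerSeries.coeff_X]
  rcases eq_or_ne n 1 with h | h
  · subst h; simp
  · simp [h]

/-- Goodearl's example: for `A = k[[t]]` over a field `k` of characteristic zero and the
map `∂(Σ aₙ tⁿ) = Σ n aₙ tⁿ`: (i) `∂` is a derivation; (ii) `ker ∂ = k`; (iii) if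
`∂(a) ∈ tᵐA` then `a ∈ k + tᵐA`; (iv) `tA` is a nonzero `∂`-stable ideal meeting `ker ∂`
trivially, so `A` is not a retractable left `A[x;∂]`-module. -/
theorem goodearl_example {k : Type*} [Field k] [CharZero k] :
    (∀ f g : PowerSeries k, eulerD k (f * g) = eulerD k f * g + f * eulerD k g) ∧
    (∀ f : PowerSeries k, eulerD k f = 0 ↔ ∃ c : k, f = PowerSeries.C c) ∧
    (∀ m : ℕ, 1 ≤ m → ∀ f : PowerSeries k,
      (∃ g : PowerSeries k, eulerD k f = PowerSeries.X ^ m * g) →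
        ∃ (c : k) (g : PowerSeries k), f = PowerSeries.C c + PowerSeries.X ^ m * g) ∧
    ((Ideal.span ({PowerSeries.X} : Set (PowerSeries k)) ≠ ⊥) ∧
      (∀ f ∈ Ideal.span ({PowerSeries.X} : Set (PowerSeries k)),
        eulerD k f ∈ Ideal.span ({PowerSeries.X} : Set (PowerSeries k))) ∧
      (∀ f ∈ Ideal.span ({PowerSeries.X} : Set (PowerSeries k)), eulerD k f = 0 → f = 0) ∧
      ¬ (∀ I : Ideal (PowerSeries k), (∀ x ∈ I, eulerD k x ∈ I) → I ≠ ⊥ →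
          ∃ c ∈ I, c ≠ 0 ∧ eulerD k c = 0)) := by
  have hkill : ∀ f ∈ Ideal.span ({PowerSeries.X} : Set (PowerSeries k)),
      eulerD k f = 0 → f = 0 := by
    intro f hf h0
    obtain ⟨c, rfl⟩ := (eulerD_eq_zero_iff f).mp h0
    rw [Ideal.mem_span_singleton] at hf
    obtain ⟨h, hh⟩ := hf
    have := congrArg (PowerSeries.coeff 0) hh
    simp [PowerSeries.coeff_zero_eq_constantCoeff] at this
    simp [this]
  refine ⟨eulerD_leibniz, eulerD_eq_zero_iff, ?_, ?_, ?_, hkill, ?_⟩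
  · intro m hm f ⟨g, hg⟩
    refine ⟨PowerSeries.coeff 0 f, ?_⟩
    have hdvd : (PowerSeries.X : PowerSeries k) ^ m ∣
        f - PowerSeries.C (PowerSeries.coeff 0 f) := by
      rw [PowerSeries.X_pow_dvd_iff]
      intro n hn
      rw [map_sub, PowerSeries.coeff_C]
      rcases Nat.eq_zero_or_pos n with h0 | h0
      · subst h0; simp
      · rw [if_neg h0.ne', sub_zero]
        have : PowerSeries.coeff n (eulerD k f) = 0 := by
          rw [hg]
          exact (PowerSeries.X_pow_dvd_iff.mp ⟨g, rfl⟩) n hn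
        rw [coeff_eulerD] at this
        rcases mul_eq_zero.mp this with h' | h'
        · exact absurd h' (Nat.cast_ne_zero.mpr h0.ne')
        · exact h'
    obtain ⟨g', hg'⟩ := hdvd
    exact ⟨g', by rw [← hg']; ring⟩
  · intro h
    have := Ideal.span_singleton_eq_bot.mp h
    exact PowerSeries.X_ne_zero this
  · intro f hf
    rw [Ideal.mem_span_singleton] at hf ⊢
    obtain ⟨h, rfl⟩ := hf
    rw [eulerD_leibniz, eulerD_X]
    exact ⟨h + eulerD k h, by ring⟩
  · intro H
    obtain ⟨c, hc, hc0, hcd⟩ := H (Ideal.span {PowerSeries.X})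
      (by
        intro f hf
        rw [Ideal.mem_span_singleton] at hf ⊢
        obtain ⟨h, rfl⟩ := hf
        rw [eulerD_leibniz, eulerD_X]
        exact ⟨h + eulerD k h, by ring⟩)
      (fun h => PowerSeries.X_ne_zero (Ideal.span_singleton_eq_bot.mp h))
    exact hc0 (hkill c hc hcd)
end

section
/- (Amitsur) Let A be a semiprime ring and M a left A-module that embeds into a direct product of copies of A (a torsionless module). Then M is retractable, i.e., Hom_A(M,N) ≠ 0 for every nonzero submodule N of M. -/
/-- In a semiprime ring, if `a * x * a = 0` for all `x`, then `a = 0`. -/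
lemma semiprime_aux {A : Type*} [Ring A]
    (hsemiprime : ∀ I : TwoSidedIdeal A, (∀ x ∈ I, ∀ y ∈ I, x * y = 0) → I = ⊥)
    (a : A) (h : ∀ x : A, a * x * a = 0) : a = 0 := by
  set T : Set A := {z | ∃ r s : A, z = r * a * s} with hT
  set C : AddSubgroup A := AddSubgroup.closure T with hC
  have hmulT : ∀ u ∈ T, ∀ v ∈ T, u * v = 0 := by
    rintro u ⟨r, s, rfl⟩ v ⟨r', s', rfl⟩
    calc r * a * s * (r' * a * s') = r * (a * (s * r') * a) * s' := by simp only [mul_assoc]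
    _ = 0 := by rw [h, mul_zero, zero_mul]
  have hmul : ∀ u ∈ C, ∀ v ∈ C, u * v = 0 := by
    intro u hu
    induction hu using AddSubgroup.closure_induction with
    | mem x hx =>
      intro v hv
      induction hv using AddSubgroup.closure_induction with
      | mem y hy => exact hmulT x hx y hy
      | zero => simp
      | add y z _ _ ihy ihz => rw [mul_add, ihy, ihz, add_zero]
      | neg y _ ihy => rw [mul_neg, ihy, neg_zero]
    | zero => intro v _; simp
    | add x y _ _ ihx ihy => intro v hv; rw [add_mul, ihx v hv, ihy v hv, add_zero]
    | neg x _ ihx => intro v hv; rw [neg_mul, ihx v hv, neg_zero]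
  have hml : ∀ {x y : A}, y ∈ C → x * y ∈ C := by
    intro x y hy
    induction hy using AddSubgroup.closure_induction with
    | mem z hz =>
      obtain ⟨r, s, rfl⟩ := hz
      exact AddSubgroup.subset_closure ⟨x * r, s, by simp [mul_assoc]⟩
    | zero => simpa using C.zero_mem
    | add y z _ _ ihy ihz => rw [mul_add]; exact C.add_mem ihy ihz
    | neg y _ ihy => rw [mul_neg]; exact C.neg_mem ihy
  have hmr : ∀ {x y : A}, x ∈ C → x * y ∈ C := by
    intro x y hx
    induction hx using AddSubgroup.closure_induction with
    | mem z hz =>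
      obtain ⟨r, s, rfl⟩ := hz
      exact AddSubgroup.subset_closure ⟨r, s * y, by simp [mul_assoc]⟩
    | zero => simpa using C.zero_mem
    | add z w _ _ ihz ihw => rw [add_mul]; exact C.add_mem ihz ihw
    | neg z _ ihz => rw [neg_mul]; exact C.neg_mem ihz
  set I : TwoSidedIdeal A := TwoSidedIdeal.mk' (C : Set A) C.zero_mem
    (fun hx hy => C.add_mem hx hy) (fun hx => C.neg_mem hx) hml hmr with hI
  have hIbot : I = ⊥ := by
    apply hsemiprime
    intro x hx y hy
    rw [hI, TwoSidedIdeal.mem_mk'] at hx hy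
    exact hmul x hx y hy
  have haI : a ∈ I := by
    rw [hI, TwoSidedIdeal.mem_mk']
    exact AddSubgroup.subset_closure ⟨1, 1, by simp⟩
  rw [hIbot, TwoSidedIdeal.mem_bot] at haI
  exact haI

/-- Amitsur: a torsionless module over a semiprime ring is retractable. If `A` is a
semiprime ring and `M` embeds `A`-linearly into a direct product `ι → A` of copies of
`A`, then `Hom_A(M, N) ≠ 0` for every nonzero submodule `N` of `M`. -/
theorem torsionless_over_semiprime_retractable {A M : Type*} [Ring A] [AddCommGroup M]
    [Module A M] {ι : Type*}
    (hsemiprime : ∀ I : TwoSidedIdeal A, (∀ x ∈ I, ∀ y ∈ I, x * y = 0) → I = ⊥)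
    (f : M →ₗ[A] (ι → A)) (hf : Function.Injective f) :
    ∀ N : Submodule A M, N ≠ ⊥ → ∃ g : M →ₗ[A] N, g ≠ 0 := by
  intro N hN
  obtain ⟨n, hnN, hn0⟩ := Submodule.exists_mem_ne_zero_of_ne_bot hN
  have hfn : f n ≠ 0 := fun h => hn0 (hf (by simpa using h))
  obtain ⟨i, hi⟩ : ∃ i, f n i ≠ 0 := by
    by_contra h
    push_neg at h
    exact hfn (funext h)
  obtain ⟨x, hx⟩ : ∃ x : A, f n i * x * f n i ≠ 0 := by
    by_contra h
    push_neg at h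
    exact hi (semiprime_aux hsemiprime _ h)
  refine ⟨{ toFun := fun m => (f m i * x) • ⟨n, hnN⟩
            map_add' := by intro m₁ m₂; simp [add_mul, add_smul]
            map_smul' := by
              intro c m
              simp only [map_smul, RingHom.id_apply, Pi.smul_apply, smul_eq_mul,
                smul_smul, mul_assoc] }, ?_⟩
  intro hg
  have h1 := LinearMap.congr_fun hg n
  simp only [LinearMap.coe_mk, AddHom.coe_mk, LinearMap.zero_apply] at h1
  have h2 : (f n i * x) • n = 0 := congrArg Subtype.val h1
  have h3 := congrFun (congrArg f h2) i
  simp only [map_smul, map_zero] at h3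
  have : f n i * x * f n i = 0 := by simpa [Pi.smul_apply, smul_eq_mul] using h3
  exact hx this
end

section
/- Let A be a ring and M a left A-module. If M is retractable and its endomorphism ring End_A(M) is a prime ring, then M is ∗-prime: for all nonzero submodules N and K of M there exists f ∈ Hom_A(M,K) with f(N) ≠ 0 (equivalently, N∗K = Σ_{f ∈ Hom_A(M,K)} f(N) is nonzero for all nonzero submodules N, K). -/
/-- If `M` is a retractable left `A`-module whose endomorphism ring is a prime ring, then
`M` is `∗`-prime: for all nonzero submodules `N, K` of `M` there is `f ∈ Hom(M,K)` with
`f(N) ≠ 0`. -/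
theorem starPrime_of_retractable_prime_endomorphism_ring {A M : Type*} [Ring A]
    [AddCommGroup M] [Module A M]
    (hret : ∀ N : Submodule A M, N ≠ ⊥ →
      ∃ f : M →ₗ[A] M, LinearMap.range f ≤ N ∧ f ≠ 0)
    (hprime : ∀ I J : TwoSidedIdeal (Module.End A M),
      (∀ x ∈ I, ∀ y ∈ J, x * y = 0) → I = ⊥ ∨ J = ⊥) :
    ∀ N K : Submodule A M, N ≠ ⊥ → K ≠ ⊥ →
      ∃ f : M →ₗ[A] M, LinearMap.range f ≤ K ∧ Submodule.map f N ≠ ⊥ := by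
  intro N K hN hK
  by_contra hcon
  push_neg at hcon
  -- every endomorphism with range in K kills N
  have hkill : ∀ s : Module.End A M, LinearMap.range s ≤ K → ∀ n ∈ N, s n = 0 := by
    intro s hs n hn
    have := hcon s hs
    have : s n ∈ (⊥ : Submodule A M) := this ▸ Submodule.mem_map_of_mem hn
    simpa using this
  obtain ⟨g, hgN, hg0⟩ := hret N hN
  obtain ⟨h, hhK, hh0⟩ := hret K hK
  -- the two-sided ideal I
  set Ic : Set (Module.End A M) :=
    {x | ∀ s : Module.End A M, LinearMap.range s ≤ K → s * x = 0} with hIc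
  have Izero : (0 : Module.End A M) ∈ Ic := fun s _ => by simp
  have Iadd : ∀ {x y : Module.End A M}, x ∈ Ic → y ∈ Ic → x + y ∈ Ic := by
    intro x y hx hy s hs
    rw [mul_add, hx s hs, hy s hs, add_zero]
  have Ineg : ∀ {x : Module.End A M}, x ∈ Ic → -x ∈ Ic := by
    intro x hx s hs
    rw [mul_neg, hx s hs, neg_zero]
  have Iml : ∀ {x y : Module.End A M}, y ∈ Ic → x * y ∈ Ic := by
    intro x y hy s hs
    have : LinearMap.range (s * x) ≤ K := by
      intro m hm
      obtain ⟨m, rfl⟩ := hm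
      exact hs ⟨x m, rfl⟩
    rw [← mul_assoc]
    exact hy _ this
  have Imr : ∀ {x y : Module.End A M}, x ∈ Ic → x * y ∈ Ic := by
    intro x y hx s hs
    rw [← mul_assoc, hx s hs, zero_mul]
  set I : TwoSidedIdeal (Module.End A M) := .mk' Ic Izero Iadd Ineg Iml Imr with hI
  -- the two-sided ideal J = left annihilator of Ic
  set Jc : Set (Module.End A M) := {y | ∀ x ∈ Ic, y * x = 0} with hJc
  have Jzero : (0 : Module.End A M) ∈ Jc := fun x _ => by simp
  have Jadd : ∀ {x y : Module.End A M}, x ∈ Jc → y ∈ Jc → x + y ∈ Jc := by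
    intro x y hx hy z hz
    rw [add_mul, hx z hz, hy z hz, add_zero]
  have Jneg : ∀ {x : Module.End A M}, x ∈ Jc → -x ∈ Jc := by
    intro x hx z hz
    rw [neg_mul, hx z hz, neg_zero]
  have Jml : ∀ {x y : Module.End A M}, y ∈ Jc → x * y ∈ Jc := by
    intro x y hy z hz
    rw [mul_assoc, hy z hz, mul_zero]
  have Jmr : ∀ {x y : Module.End A M}, x ∈ Jc → x * y ∈ Jc := by
    intro x y hx z hz
    rw [mul_assoc]
    exact hx _ (Iml hz)
  set J : TwoSidedIdeal (Module.End A M) := .mk' Jc Jzero Jadd Jneg Jml Jmr with hJ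
  -- g ∈ I
  have hgI : g ∈ Ic := by
    intro s hs
    ext m
    have : g m ∈ N := hgN ⟨m, rfl⟩
    simpa using hkill s hs _ this
  -- h ∈ J
  have hhJ : h ∈ Jc := fun x hx => hx h hhK
  have := hprime J I (by
    intro y hy x hx
    exact (TwoSidedIdeal.mem_mk' _ _ _ _ _ _ y).1 hy x ((TwoSidedIdeal.mem_mk' _ _ _ _ _ _ x).1 hx))
  rcases this with hJbot | hIbot
  · exact hh0 (by
      have : h ∈ (⊥ : TwoSidedIdeal (Module.End A M)) :=
        hJbot ▸ (TwoSidedIdeal.mem_mk' _ _ _ _ _ _ h).2 hhJ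
      simpa using (TwoSidedIdeal.mem_bot _).1 this)
  · exact hg0 (by
      have : g ∈ (⊥ : TwoSidedIdeal (Module.End A M)) :=
        hIbot ▸ (TwoSidedIdeal.mem_mk' _ _ _ _ _ _ g).2 hgI
      simpa using (TwoSidedIdeal.mem_bot _).1 this)
end
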